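/- Let R be a commutative unital Krasner hyperring. The hyperspace 𝓘⁺_R of proper hyperideals of R, with the lower topology generated by the closed subbasis {V_J = {I ∈ 𝓘⁺_R : J ⊆ I} : J a hyperideal of R}, is quasi-compact. -/

import Mathlib

universe u v

/-- A canonical hypergroup: a commutative, associative hyperoperation with
neutral element, unique inverses, and reversibility. -/
structure CanonicalHypergroup (R : Type u) where
  add : R → R → Set R
  zero : R
  neg : R → R
  add_nonempty : ∀ a b : R, (add a b).Nonempty
  add_comm : ∀ a b : R, add a b = add b a
  add_assoc : ∀ a b c : R, (⋃ x ∈ add a b, add x c) = ⋃ x ∈ add b c, add a x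
  add_zero : ∀ a : R, add a zero = {a}
  zero_mem_add_neg : ∀ a : R, zero ∈ add a (neg a)
  neg_unique : ∀ a b : R, zero ∈ add a b → b = neg a
  reversible : ∀ a b c : R, a ∈ add b c → c ∈ add (neg b) a

/-- A commutative Krasner hyperring. -/
structure KrasnerHyperring (R : Type u) extends CanonicalHypergroup R where
  mul : R → R → R
  mul_comm : ∀ a b : R, mul a b = mul b a
  mul_assoc : ∀ a b c : R, mul (mul a b) c = mul a (mul b c)
  mul_zero : ∀ a : R, mul a zero = zero
  distrib : ∀ a b c : R, (fun x => mul a x) '' add b c = add (mul a b) (mul a c)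

/-- A commutative unital Krasner hyperring. -/
structure UnitalKrasnerHyperring (R : Type u) extends KrasnerHyperring R where
  one : R
  mul_one : ∀ a : R, mul a one = a

/-- A hyperideal of a Krasner hyperring: a nonempty subset closed under
hyperaddition, negation, and multiplication by arbitrary elements. -/
def IsHyperideal {R : Type u} (H : KrasnerHyperring R) (I : Set R) : Prop :=
  I.Nonempty ∧ (∀ a ∈ I, ∀ b ∈ I, H.add a b ⊆ I) ∧ (∀ a ∈ I, H.neg a ∈ I) ∧
    ∀ r a : R, a ∈ I → H.mul r a ∈ I

/-- Iterated hypersum of a list of elements (empty sum is `{0}`). -/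
def listHyperSum {R : Type u} (H : CanonicalHypergroup R) : List R → Set R
  | [] => {H.zero}
  | a :: l => ⋃ x ∈ listHyperSum H l, H.add a x

/-- The sum of a family of hyperideals: all `x` lying in a finite hypersum of
elements picked from finitely many members of the family. -/
def hyperidealFamilySum {R : Type u} {Λ : Type v} (H : KrasnerHyperring R)
    (I : Λ → Set R) : Set R :=
  {x | ∃ (s : Finset Λ) (a : Λ → R), (∀ l ∈ s, a l ∈ I l) ∧
    x ∈ listHyperSum H.toCanonicalHypergroup (s.toList.map a)}

/-- The hyperideal generated by a set: the intersection of all hyperideals containing it. -/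
def genHyperideal {R : Type u} (H : KrasnerHyperring R) (S : Set R) : Set R :=
  ⋂₀ {I : Set R | IsHyperideal H I ∧ S ⊆ I}

/-- Compact element of the lattice of hyperideals. -/
def IsCompactHyperideal {R : Type u} (H : KrasnerHyperring R) (I : Set R) : Prop :=
  IsHyperideal H I ∧ ∀ (Λ : Type u) (J : Λ → Set R), (∀ l, IsHyperideal H (J l)) →
    I ⊆ genHyperideal H (⋃ l, J l) →
      ∃ s : Finset Λ, I ⊆ genHyperideal H (⋃ l ∈ s, J l)

/-- A spectral space: quasi-compact, sober, with a basis of quasi-compact open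
sets closed under finite intersections. -/
def IsSpectralSpace (X : Type u) [TopologicalSpace X] : Prop :=
  CompactSpace X ∧ QuasiSober X ∧ T0Space X ∧
    ∃ B : Set (Set X), TopologicalSpace.IsTopologicalBasis B ∧
      (∀ U ∈ B, IsCompact U) ∧ ∀ U ∈ B, ∀ V ∈ B, U ∩ V ∈ B

/-- The hyperspace of all hyperideals of `R`. -/
def HyperidealSpace {R : Type u} (H : KrasnerHyperring R) : Type u :=
  {I : Set R // IsHyperideal H I}

/-- The hyperspace of proper hyperideals of `R`. -/
def ProperHyperidealSpace {R : Type u} (H : KrasnerHyperring R) : Type u :=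
  {I : Set R // IsHyperideal H I ∧ I ≠ Set.univ}

/-- The lower topology on the hyperspace of all hyperideals: the closed sets are
generated by the subbasis `V_J = {I : J ⊆ I}` for hyperideals `J`. -/
instance hyperidealSpaceTopology {R : Type u} (H : KrasnerHyperring R) :
    TopologicalSpace (HyperidealSpace H) :=
  TopologicalSpace.generateFrom
    {U | ∃ J : Set R, IsHyperideal H J ∧ U = {I : HyperidealSpace H | ¬ J ⊆ I.1}}

/-- The lower topology on the hyperspace of proper hyperideals. -/
instance properHyperidealSpaceTopology {R : Type u} (H : KrasnerHyperring R) :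
    TopologicalSpace (ProperHyperidealSpace H) :=
  TopologicalSpace.generateFrom
    {U | ∃ J : Set R, IsHyperideal H J ∧ U = {I : ProperHyperidealSpace H | ¬ J ⊆ I.1}}

/-- The lower topology on a complete lattice: closed sets generated by the
subbasis of principal up-sets `Ici x`. -/
def latticeLowerTopology (L : Type u) [CompleteLattice L] : TopologicalSpace L :=
  TopologicalSpace.generateFrom {U | ∃ x : L, U = (Set.Ici x)ᶜ}

section Aux

variable {R : Type u}

lemma CH.add_zero' (C : CanonicalHypergroup R) (a : R) : C.add C.zero a = {a} := by
  rw [C.add_comm, C.add_zero]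

lemma CH.neg_mem_add (C : CanonicalHypergroup R) {a b z : R} (hz : z ∈ C.add a b) :
    C.neg z ∈ C.add (C.neg a) (C.neg b) := by
  have h1 : b ∈ C.add (C.neg a) z := C.reversible z a b hz
  rw [C.add_comm] at h1
  have h2 : C.neg a ∈ C.add (C.neg z) b := C.reversible b z (C.neg a) h1
  rw [C.add_comm] at h2
  have h3 : C.neg z ∈ C.add (C.neg b) (C.neg a) := C.reversible (C.neg a) b (C.neg z) h2
  rwa [C.add_comm] at h3

lemma listHyperSum_append (C : CanonicalHypergroup R) :
    ∀ (l1 l2 : List R) (x y z : R), x ∈ listHyperSum C l1 → y ∈ listHyperSum C l2 →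
      z ∈ C.add x y → z ∈ listHyperSum C (l1 ++ l2)
  | [], l2, x, y, z, hx, hy, hz => by
      simp only [listHyperSum, Set.mem_singleton_iff] at hx
      subst hx
      rw [CH.add_zero' C y, Set.mem_singleton_iff] at hz
      subst hz
      simpa using hy
  | a :: t, l2, x, y, z, hx, hy, hz => by
      simp only [listHyperSum, Set.mem_iUnion, List.cons_append] at hx ⊢
      obtain ⟨u, hu, hxu⟩ := hx
      have : z ∈ ⋃ w ∈ C.add a u, C.add w y := Set.mem_biUnion hxu hz
      rw [C.add_assoc] at this
      obtain ⟨w, hw, hzw⟩ := Set.mem_iUnion₂.mp this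
      exact ⟨w, listHyperSum_append C t l2 u y w hu hy hw, hzw⟩

lemma listHyperSum_neg (C : CanonicalHypergroup R) :
    ∀ (l : List R) (x : R), x ∈ listHyperSum C l → C.neg x ∈ listHyperSum C (l.map C.neg)
  | [], x, hx => by
      simp only [listHyperSum, Set.mem_singleton_iff] at hx ⊢
      subst hx
      exact (C.neg_unique C.zero C.zero (by rw [C.add_zero]; rfl)).symm
  | a :: t, x, hx => by
      simp only [listHyperSum, Set.mem_iUnion, List.map] at hx ⊢
      obtain ⟨u, hu, hxu⟩ := hx
      exact ⟨C.neg u, listHyperSum_neg C t u hu, CH.neg_mem_add C hxu⟩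

lemma listHyperSum_mul (H : KrasnerHyperring R) (r : R) :
    ∀ (l : List R) (x : R), x ∈ listHyperSum H.toCanonicalHypergroup l →
      H.mul r x ∈ listHyperSum H.toCanonicalHypergroup (l.map (H.mul r))
  | [], x, hx => by
      simp only [listHyperSum, Set.mem_singleton_iff] at hx ⊢
      subst hx
      exact H.mul_zero r
  | a :: t, x, hx => by
      simp only [listHyperSum, Set.mem_iUnion, List.map] at hx ⊢
      obtain ⟨u, hu, hxu⟩ := hx
      refine ⟨H.mul r u, listHyperSum_mul H r t u hu, ?_⟩
      rw [← H.distrib]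
      exact ⟨x, hxu, rfl⟩

lemma zero_mem_hyperideal {H : KrasnerHyperring R} {I : Set R} (hI : IsHyperideal H I) :
    H.zero ∈ I := by
  obtain ⟨⟨a, ha⟩, hadd, hneg, _⟩ := hI
  exact hadd a ha (H.neg a) (hneg a ha) (H.zero_mem_add_neg a)

lemma listHyperSum_subset {H : KrasnerHyperring R} {I : Set R} (hI : IsHyperideal H I) :
    ∀ l : List R, (∀ a ∈ l, a ∈ I) → listHyperSum H.toCanonicalHypergroup l ⊆ I
  | [], _ => by
      intro x hx
      simp only [listHyperSum, Set.mem_singleton_iff] at hx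
      subst hx
      exact zero_mem_hyperideal hI
  | a :: t, h => by
      intro x hx
      simp only [listHyperSum, Set.mem_iUnion] at hx
      obtain ⟨u, hu, hxu⟩ := hx
      exact hI.2.1 a (h a (by simp)) u
        (listHyperSum_subset hI t (fun b hb => h b (by simp [hb])) hu) hxu

lemma eq_univ_of_one_mem {H : UnitalKrasnerHyperring R} {I : Set R}
    (hI : IsHyperideal H.toKrasnerHyperring I) (h1 : H.one ∈ I) : I = Set.univ := by
  ext r
  simp only [Set.mem_univ, iff_true]
  have := hI.2.2.2 r H.one h1
  rwa [H.mul_one] at this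

end Aux

lemma mem_listHyperSum_singleton {R : Type u} (C : CanonicalHypergroup R) (x : R) :
    x ∈ listHyperSum C [x] := by
  simp only [listHyperSum, Set.mem_iUnion, Set.mem_singleton_iff]
  exact ⟨C.zero, rfl, by rw [C.add_zero]; rfl⟩

/-- the hyperspace of proper hyperideals is quasi-compact. -/
theorem properHyperidealSpace_compact {R : Type u} (H : UnitalKrasnerHyperring R) :
    CompactSpace (ProperHyperidealSpace H.toKrasnerHyperring) := by
  set K := H.toKrasnerHyperring with hK
  constructor
  rw [isCompact_iff_ultrafilter_le_nhds]
  intro F _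
  set 𝒥 : Set (Set R) :=
    {J | IsHyperideal K J ∧ {I : ProperHyperidealSpace K | J ⊆ I.1} ∈ F} with h𝒥
  set S : Set R := ⋃₀ 𝒥 with hS
  set T : Set R :=
    {x | ∃ L : List R, (∀ a ∈ L, a ∈ S) ∧
      x ∈ listHyperSum K.toCanonicalHypergroup L} with hTdef
  have hSmem : ∀ a ∈ S, ∃ J ∈ 𝒥, a ∈ J := fun a ha => ha
  have hSneg : ∀ a ∈ S, K.neg a ∈ S := by
    intro a ha
    obtain ⟨J, hJ, haJ⟩ := hSmem a ha
    exact ⟨J, hJ, hJ.1.2.2.1 a haJ⟩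
  have hSmul : ∀ (r : R), ∀ a ∈ S, K.mul r a ∈ S := by
    intro r a ha
    obtain ⟨J, hJ, haJ⟩ := hSmem a ha
    exact ⟨J, hJ, hJ.1.2.2.2 r a haJ⟩
  have hT : IsHyperideal K T := by
    refine ⟨⟨K.zero, [], by simp, rfl⟩, ?_, ?_, ?_⟩
    · rintro x ⟨L1, hL1, hx⟩ y ⟨L2, hL2, hy⟩ z hz
      refine ⟨L1 ++ L2, ?_, listHyperSum_append _ L1 L2 x y z hx hy hz⟩
      intro a ha
      rcases List.mem_append.mp ha with h | h
      · exact hL1 a h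
      · exact hL2 a h
    · rintro x ⟨L, hL, hx⟩
      refine ⟨L.map K.neg, ?_, listHyperSum_neg _ L x hx⟩
      intro a ha
      obtain ⟨b, hb, rfl⟩ := List.mem_map.mp ha
      exact hSneg b (hL b hb)
    · rintro r x ⟨L, hL, hx⟩
      refine ⟨L.map (K.mul r), ?_, listHyperSum_mul K r L x hx⟩
      intro a ha
      obtain ⟨b, hb, rfl⟩ := List.mem_map.mp ha
      exact hSmul r b (hL b hb)
  have hcap : ∀ L : List R, (∀ a ∈ L, a ∈ S) →
      {I : ProperHyperidealSpace K | ∀ a ∈ L, a ∈ I.1} ∈ F := by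
    intro L
    induction L with
    | nil =>
      intro _
      refine Filter.mem_of_superset Filter.univ_mem ?_
      intro I _
      simp
    | cons a t ih =>
      intro h
      obtain ⟨J, hJ, haJ⟩ := hSmem a (h a (by simp))
      have h2 := ih (fun b hb => h b (by simp [hb]))
      filter_upwards [hJ.2, h2] with I hI1 hI2
      intro b hb
      rcases List.mem_cons.mp hb with rfl | hb
      · exact hI1 haJ
      · exact hI2 b hb
  have h1T : H.one ∉ T := by
    rintro ⟨L, hL, h1⟩
    obtain ⟨I, hI⟩ := Filter.nonempty_of_mem (hcap L hL)
    have hone : H.one ∈ I.1 := listHyperSum_subset I.2.1 L (fun a ha => hI a ha) h1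
    exact I.2.2 (eq_univ_of_one_mem I.2.1 hone)
  have hTproper : T ≠ Set.univ := fun h => h1T (h ▸ Set.mem_univ H.one)
  refine ⟨(id ⟨T, hT, hTproper⟩ : ProperHyperidealSpace K), ?_⟩
  rw [show (properHyperidealSpaceTopology K) = TopologicalSpace.generateFrom
    {U | ∃ J : Set R, IsHyperideal K J ∧
      U = {I : ProperHyperidealSpace K | ¬ J ⊆ I.1}} from rfl,
    TopologicalSpace.nhds_generateFrom]
  refine ⟨Set.mem_univ _, le_iInf₂ fun s hs => Filter.le_principal_iff.mpr ?_⟩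
  obtain ⟨hmem, J, hJ, rfl⟩ := hs
  rcases F.mem_or_compl_mem {I : ProperHyperidealSpace K | ¬ J ⊆ I.1} with h | h
  · exact h
  · exfalso
    have hc : {I : ProperHyperidealSpace K | ¬ J ⊆ I.1}ᶜ
        = {I : ProperHyperidealSpace K | J ⊆ I.1} := by
      ext I; simp [Set.mem_compl_iff]
    rw [hc] at h
    have hJ𝒥 : J ∈ 𝒥 := ⟨hJ, h⟩
    apply hmem
    intro x hx
    exact ⟨[x], by simpa using ⟨J, hJ𝒥, hx⟩, mem_listHyperSum_singleton _ x⟩
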